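/- Let f be differentiable on I° with f' integrable on [a,b], a < b, q ≥ 1, and |f'|^q s-convex in the second sense on [a,b] for some s ∈ (0,1]. Then the trapezoid inequality holds: |(f(a)+f(b))/2 - (1/(b-a))∫ₐᵇ f(x)dx| ≤ ((b-a)/8)(2^{1-s}/((s+1)(s+2)))^{1/q} · { (|f'(b)|^q + (2^{s+1}+1)|f'(a)|^q)^{1/q} + (|f'(a)|^q + (2^{s+1}+1)|f'(b)|^q)^{1/q} }. -/

import Mathlib

open MeasureTheory ENNReal

lemma weighted_holder {q : ℝ} (hq : 1 ≤ q) (μ : Measure ℝ) (w g : ℝ → ℝ)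
    (hw0 : 0 ≤ᵐ[μ] w) (hg0 : 0 ≤ᵐ[μ] g)
    (hw : Integrable w μ) (hgm : AEStronglyMeasurable g μ)
    (hwg : Integrable (fun x => w x * g x) μ)
    (hwgq : Integrable (fun x => w x * g x ^ q) μ) :
    ∫ x, w x * g x ∂μ ≤
      (∫ x, w x ∂μ) ^ (1 - 1/q) * (∫ x, w x * g x ^ q ∂μ) ^ (1/q) := by
  rcases eq_or_lt_of_le hq with rfl | hq1
  · simp
  have hq0 : 0 < q := lt_trans zero_lt_one hq1
  set p := q.conjExponent with hp
  have hpq : p.HolderConjugate q := (Real.HolderConjugate.conjExponent hq1).symm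
  have hp1 : 1 < p := hpq.lt
  have hp0 : 0 < p := lt_trans zero_lt_one hp1
  have hsum : 1/p + 1/q = 1 := by simpa [one_div] using hpq.inv_add_inv_eq_one
  set W : ℝ → ℝ≥0∞ := fun x => ENNReal.ofReal (w x) with hW
  set G : ℝ → ℝ≥0∞ := fun x => ENNReal.ofReal (g x) with hG
  have hWm : AEMeasurable W μ :=
    ENNReal.measurable_ofReal.comp_aemeasurable hw.aestronglyMeasurable.aemeasurable
  have hGm : AEMeasurable G μ :=
    ENNReal.measurable_ofReal.comp_aemeasurable hgm.aemeasurable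
  have key := ENNReal.lintegral_mul_le_Lp_mul_Lq μ hpq
    (f := fun x => (W x) ^ (1/p)) (g := fun x => (W x) ^ (1/q) * G x)
    (hWm.pow_const _) ((hWm.pow_const _).mul hGm)
  have e1 : ∀ x, ((fun x => (W x) ^ (1/p)) * fun x => (W x) ^ (1/q) * G x) x
      = W x * G x := by
    intro x
    simp only [Pi.mul_apply]
    rw [← mul_assoc, ← ENNReal.rpow_add_of_nonneg _ _ (by positivity) (by positivity),
      hsum, ENNReal.rpow_one]
  have e2 : ∀ x, ((W x) ^ (1/p)) ^ p = W x := by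
    intro x
    rw [← ENNReal.rpow_mul, one_div, inv_mul_cancel₀ (ne_of_gt hp0), ENNReal.rpow_one]
  have e3 : ∀ x, ((W x) ^ (1/q) * G x) ^ q = W x * (G x) ^ q := by
    intro x
    rw [ENNReal.mul_rpow_of_nonneg _ _ (by positivity), ← ENNReal.rpow_mul,
      one_div, inv_mul_cancel₀ (ne_of_gt hq0), ENNReal.rpow_one]
  simp only [e1, e2, e3] at key
  -- rewrite real integrals as lintegrals
  have l1 : ∫ x, w x * g x ∂μ = (∫⁻ x, W x * G x ∂μ).toReal := by
    rw [integral_eq_lintegral_of_nonneg_ae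
      (by filter_upwards [hw0, hg0] with x h1 h2; exact mul_nonneg h1 h2)
      hwg.aestronglyMeasurable]
    congr 1
    apply lintegral_congr_ae
    filter_upwards [hw0, hg0] with x h1 h2
    rw [ENNReal.ofReal_mul h1]
  have l2 : ∫ x, w x ∂μ = (∫⁻ x, W x ∂μ).toReal := by
    rw [integral_eq_lintegral_of_nonneg_ae hw0 hw.aestronglyMeasurable]
  have l3 : ∫ x, w x * g x ^ q ∂μ = (∫⁻ x, W x * (G x) ^ q ∂μ).toReal := by
    rw [integral_eq_lintegral_of_nonneg_ae
      (by filter_upwards [hw0, hg0] with x h1 h2; exact mul_nonneg h1 (Real.rpow_nonneg h2 q))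
      hwgq.aestronglyMeasurable]
    congr 1
    apply lintegral_congr_ae
    filter_upwards [hw0, hg0] with x h1 h2
    rw [ENNReal.ofReal_mul h1, ENNReal.ofReal_rpow_of_nonneg h2 (le_of_lt hq0)]
  have fin1 : (∫⁻ x, W x ∂μ) ≠ ⊤ := hw.lintegral_lt_top.ne
  have fin3 : (∫⁻ x, W x * (G x) ^ q ∂μ) ≠ ⊤ := by
    have := hwgq.lintegral_lt_top.ne
    rw [ne_eq, ← lintegral_congr_ae (g := fun x => ENNReal.ofReal (w x * g x ^ q)) ?_] at this
    · exact this
    · filter_upwards [hw0, hg0] with x h1 h2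
      rw [ENNReal.ofReal_mul h1, ENNReal.ofReal_rpow_of_nonneg h2 (le_of_lt hq0)]
  rw [l1, l2, l3]
  have h1p : 1/p = 1 - 1/q := by linarith
  calc (∫⁻ x, W x * G x ∂μ).toReal
      ≤ ((∫⁻ x, W x ∂μ) ^ (1/p) * (∫⁻ x, W x * (G x) ^ q ∂μ) ^ (1/q)).toReal := by
        apply ENNReal.toReal_mono _ key
        exact ENNReal.mul_ne_top (ENNReal.rpow_ne_top_of_nonneg (by positivity) fin1)
          (ENNReal.rpow_ne_top_of_nonneg (by positivity) fin3)
    _ = (∫⁻ x, W x ∂μ).toReal ^ (1 - 1/q) * (∫⁻ x, W x * (G x) ^ q ∂μ).toReal ^ (1/q) := by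
        rw [ENNReal.toReal_mul, ENNReal.toReal_rpow, ENNReal.toReal_rpow, h1p]

private lemma d_pow_sub (r p x : ℝ) (hp : 1 ≤ p) :
    HasDerivAt (fun y => (y - r) ^ p) (p * (x - r) ^ (p - 1)) x := by
  simpa [Function.comp_def] using (Real.hasDerivAt_rpow_const (x := x - r) (p := p) (Or.inr hp)).comp x
    ((hasDerivAt_id x).sub_const r)

private lemma d_pow_sub' (r p x : ℝ) (hp : 1 ≤ p) :
    HasDerivAt (fun y => (r - y) ^ p) (-(p * (r - x) ^ (p - 1))) x := by
  simpa [Function.comp_def] using (Real.hasDerivAt_rpow_const (x := r - x) (p := p) (Or.inr hp)).comp x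
    ((hasDerivAt_id x).const_sub r)

private lemma cont_aux (r s : ℝ) (hs : 0 ≤ s) : Continuous fun x : ℝ => (x - r) ^ s :=
  (Real.continuous_rpow_const hs).comp (continuous_id.sub continuous_const)

private lemma cont_aux' (r s : ℝ) (hs : 0 ≤ s) : Continuous fun x : ℝ => (r - x) ^ s :=
  (Real.continuous_rpow_const hs).comp (continuous_const.sub continuous_id)

private lemma int1 (c h s : ℝ) (hh : 0 < h) (hs : 0 < s) :
    ∫ x in c..(c+h), ((c+h) - x) * (x - c) ^ s = h ^ (s+2) / ((s+1)*(s+2)) := by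
  have h1 : (0:ℝ) < s + 1 := by linarith
  have h2 : (0:ℝ) < s + 2 := by linarith
  have key : ∀ x ∈ Set.uIcc c (c+h), HasDerivAt
      (fun y => h * (y - c) ^ (s+1) / (s+1) - (y - c) ^ (s+2) / (s+2))
      (((c+h) - x) * (x - c) ^ s) x := by
    intro x hx
    rw [Set.uIcc_of_le (by linarith)] at hx
    have hx0 : 0 ≤ x - c := by linarith [hx.1]
    have D := (((d_pow_sub c (s+1) x (by linarith)).const_mul h).div_const (s+1)).sub
      ((d_pow_sub c (s+2) x (by linarith)).div_const (s+2))
    refine D.congr_deriv ?_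
    have e1 : s + 1 - 1 = s := by ring
    have e2 : s + 2 - 1 = s + 1 := by ring
    rw [e1, e2, Real.rpow_add' hx0 (by linarith : s + 1 ≠ 0), Real.rpow_one]
    field_simp
    ring
  rw [intervalIntegral.integral_eq_sub_of_hasDerivAt key
    (((continuous_const.sub continuous_id).mul (cont_aux c s hs.le)).intervalIntegrable _ _)]
  have hcc : c + h - c = h := by ring
  rw [hcc, sub_self, Real.zero_rpow (by linarith : s + 1 ≠ 0),
    Real.zero_rpow (by linarith : s + 2 ≠ 0)]
  have e : s + 2 = s + 1 + 1 := by ring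
  rw [e, Real.rpow_add' hh.le (by linarith : s + 1 + 1 ≠ 0), Real.rpow_one]
  field_simp
  ring

private lemma int2 (c h s : ℝ) (hh : 0 < h) (hs : 0 < s) :
    ∫ x in c..(c+h), (x - c) * ((c+h) - x) ^ s = h ^ (s+2) / ((s+1)*(s+2)) := by
  have h1 : (0:ℝ) < s + 1 := by linarith
  have h2 : (0:ℝ) < s + 2 := by linarith
  have key : ∀ x ∈ Set.uIcc c (c+h), HasDerivAt
      (fun y => ((c+h) - y) ^ (s+2) / (s+2) - h * ((c+h) - y) ^ (s+1) / (s+1))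
      ((x - c) * ((c+h) - x) ^ s) x := by
    intro x hx
    rw [Set.uIcc_of_le (by linarith)] at hx
    have hx0 : 0 ≤ (c+h) - x := by linarith [hx.2]
    have D := ((d_pow_sub' (c+h) (s+2) x (by linarith)).div_const (s+2)).sub
      (((d_pow_sub' (c+h) (s+1) x (by linarith)).const_mul h).div_const (s+1))
    refine D.congr_deriv ?_
    have e1 : s + 1 - 1 = s := by ring
    have e2 : s + 2 - 1 = s + 1 := by ring
    rw [e1, e2, Real.rpow_add' hx0 (by linarith : s + 1 ≠ 0), Real.rpow_one]
    field_simp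
    ring
  rw [intervalIntegral.integral_eq_sub_of_hasDerivAt key
    (((continuous_id.sub continuous_const).mul (cont_aux' (c+h) s hs.le)).intervalIntegrable _ _)]
  have hcc : c + h - c = h := by ring
  rw [hcc, sub_self, Real.zero_rpow (by linarith : s + 1 ≠ 0),
    Real.zero_rpow (by linarith : s + 2 ≠ 0)]
  have e : s + 2 = s + 1 + 1 := by ring
  rw [e, Real.rpow_add' hh.le (by linarith : s + 1 + 1 ≠ 0), Real.rpow_one]
  field_simp
  ring

private lemma int3 (c h s : ℝ) (hh : 0 < h) (hs : 0 < s) :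
    ∫ x in c..(c+h), ((c+h) - x) * ((c+2*h) - x) ^ s
      = h ^ (s+2) * (1 + s * 2^(s+1)) / ((s+1)*(s+2)) := by
  have h1 : (0:ℝ) < s + 1 := by linarith
  have h2 : (0:ℝ) < s + 2 := by linarith
  have key : ∀ x ∈ Set.uIcc c (c+h), HasDerivAt
      (fun y => h * ((c+2*h) - y) ^ (s+1) / (s+1) - ((c+2*h) - y) ^ (s+2) / (s+2))
      (((c+h) - x) * ((c+2*h) - x) ^ s) x := by
    intro x hx
    rw [Set.uIcc_of_le (by linarith)] at hx
    have hx0 : 0 ≤ (c+2*h) - x := by linarith [hx.2]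
    have D := (((d_pow_sub' (c+2*h) (s+1) x (by linarith)).const_mul h).div_const (s+1)).sub
      ((d_pow_sub' (c+2*h) (s+2) x (by linarith)).div_const (s+2))
    refine D.congr_deriv ?_
    have e1 : s + 1 - 1 = s := by ring
    have e2 : s + 2 - 1 = s + 1 := by ring
    rw [e1, e2, Real.rpow_add' hx0 (by linarith : s + 1 ≠ 0), Real.rpow_one]
    field_simp
    ring
  rw [intervalIntegral.integral_eq_sub_of_hasDerivAt key
    (((continuous_const.sub continuous_id).mul (cont_aux' (c+2*h) s hs.le)).intervalIntegrable _ _)]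
  have e1 : c + 2*h - (c+h) = h := by ring
  have e2 : c + 2*h - c = 2*h := by ring
  rw [e1, e2]
  rw [Real.mul_rpow (by norm_num) hh.le, Real.mul_rpow (by norm_num) hh.le]
  have e : s + 2 = s + 1 + 1 := by ring
  rw [e, Real.rpow_add' hh.le (by linarith : s + 1 + 1 ≠ 0), Real.rpow_one,
    Real.rpow_add' (by norm_num : (0:ℝ) ≤ 2) (by linarith : s + 1 + 1 ≠ 0), Real.rpow_one]
  field_simp
  ring

private lemma int4 (c h s : ℝ) (hh : 0 < h) (hs : 0 < s) :
    ∫ x in c..(c+h), (x - c) * (x - (c - h)) ^ s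
      = h ^ (s+2) * (1 + s * 2^(s+1)) / ((s+1)*(s+2)) := by
  have h1 : (0:ℝ) < s + 1 := by linarith
  have h2 : (0:ℝ) < s + 2 := by linarith
  have key : ∀ x ∈ Set.uIcc c (c+h), HasDerivAt
      (fun y => (y - (c-h)) ^ (s+2) / (s+2) - h * (y - (c-h)) ^ (s+1) / (s+1))
      ((x - c) * (x - (c - h)) ^ s) x := by
    intro x hx
    rw [Set.uIcc_of_le (by linarith)] at hx
    have hx0 : 0 ≤ x - (c - h) := by linarith [hx.1]
    have D := ((d_pow_sub (c-h) (s+2) x (by linarith)).div_const (s+2)).sub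
      (((d_pow_sub (c-h) (s+1) x (by linarith)).const_mul h).div_const (s+1))
    refine D.congr_deriv ?_
    have e1 : s + 1 - 1 = s := by ring
    have e2 : s + 2 - 1 = s + 1 := by ring
    rw [e1, e2, Real.rpow_add' hx0 (by linarith : s + 1 ≠ 0), Real.rpow_one]
    field_simp
    ring
  rw [intervalIntegral.integral_eq_sub_of_hasDerivAt key
    (((continuous_id.sub continuous_const).mul (cont_aux (c-h) s hs.le)).intervalIntegrable _ _)]
  have e1 : c + h - (c - h) = 2*h := by ring
  have e2 : c - (c - h) = h := by ring
  rw [e1, e2]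
  rw [Real.mul_rpow (by norm_num) hh.le, Real.mul_rpow (by norm_num) hh.le]
  have e : s + 2 = s + 1 + 1 := by ring
  rw [e, Real.rpow_add' hh.le (by linarith : s + 1 + 1 ≠ 0), Real.rpow_one,
    Real.rpow_add' (by norm_num : (0:ℝ) ≤ 2) (by linarith : s + 1 + 1 ≠ 0), Real.rpow_one]
  field_simp
  ring

private lemma half_est {q : ℝ} (hq : 1 ≤ q) {u v : ℝ} (huv : u ≤ v)
    (w g r : ℝ → ℝ) (hwc : Continuous w) (hw0 : ∀ x ∈ Set.Ioc u v, 0 ≤ w x)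
    (hg : IntegrableOn g (Set.Ioc u v) volume)
    (hrint : IntegrableOn (fun x => w x * r x) (Set.Ioc u v) volume)
    (hbd : ∀ x ∈ Set.Ioc u v, |g x| ^ q ≤ r x) :
    ∫ x in Set.Ioc u v, w x * |g x| ≤
      (∫ x in Set.Ioc u v, w x) ^ (1 - 1/q) * (∫ x in Set.Ioc u v, w x * r x) ^ (1/q) := by
  have hq0 : 0 < q := lt_of_lt_of_le zero_lt_one hq
  set μ := volume.restrict (Set.Ioc u v) with hμ
  have hgm : AEStronglyMeasurable g μ := hg.aestronglyMeasurable
  have habs : AEStronglyMeasurable (fun x => |g x|) μ := by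
    simpa [Real.norm_eq_abs] using hgm.norm
  have hgq : AEStronglyMeasurable (fun x => |g x| ^ q) μ :=
    ((Real.continuous_rpow_const hq0.le).comp continuous_abs).comp_aestronglyMeasurable hgm
  have hw_ae : 0 ≤ᵐ[μ] w := (ae_restrict_iff' measurableSet_Ioc).2 (ae_of_all _ hw0)
  have hwq_int : Integrable (fun x => w x * |g x| ^ q) μ := by
    refine hrint.mono' (hwc.aestronglyMeasurable.restrict.mul hgq) ?_
    refine (ae_restrict_iff' measurableSet_Ioc).2 (ae_of_all _ fun x hx => ?_)
    have h1 := hw0 x hx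
    have h2 : (0:ℝ) ≤ |g x| ^ q := Real.rpow_nonneg (abs_nonneg _) _
    rw [Real.norm_eq_abs, abs_mul, abs_of_nonneg h1, abs_of_nonneg h2]
    exact mul_le_mul_of_nonneg_left (hbd x hx) h1
  have hgi : IntervalIntegrable g volume u v :=
    (intervalIntegrable_iff_integrableOn_Ioc_of_le huv).mpr hg
  have hwg_int : Integrable (fun x => w x * |g x|) μ :=
    (intervalIntegrable_iff_integrableOn_Ioc_of_le huv).mp
      (hgi.abs.continuousOn_mul hwc.continuousOn)
  have hw_int : Integrable w μ :=
    (intervalIntegrable_iff_integrableOn_Ioc_of_le huv).mp (hwc.intervalIntegrable u v)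
  calc ∫ x in Set.Ioc u v, w x * |g x|
      ≤ (∫ x in Set.Ioc u v, w x) ^ (1 - 1/q) * (∫ x in Set.Ioc u v, w x * |g x| ^ q) ^ (1/q) :=
        weighted_holder hq μ w (fun x => |g x|) hw_ae (ae_of_all _ fun x => abs_nonneg _)
          hw_int habs hwg_int hwq_int
    _ ≤ (∫ x in Set.Ioc u v, w x) ^ (1 - 1/q) * (∫ x in Set.Ioc u v, w x * r x) ^ (1/q) := by
        refine mul_le_mul_of_nonneg_left ?_
          (Real.rpow_nonneg (setIntegral_nonneg measurableSet_Ioc hw0) _)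
        refine Real.rpow_le_rpow ?_ ?_ (by positivity)
        · exact setIntegral_nonneg measurableSet_Ioc fun x hx =>
            mul_nonneg (hw0 x hx) (Real.rpow_nonneg (abs_nonneg _) _)
        · exact setIntegral_mono_on hwq_int hrint measurableSet_Ioc fun x hx =>
            mul_le_mul_of_nonneg_left (hbd x hx) (hw0 x hx)

private lemma int0a (c h : ℝ) : ∫ x in c..(c+h), ((c+h) - x) = h*h/2 := by
  have key : ∀ x ∈ Set.uIcc c (c+h), HasDerivAt (fun y => (c+h)*y - y^2/2) ((c+h) - x) x := by
    intro x _
    have D := ((hasDerivAt_id x).const_mul (c+h)).sub ((hasDerivAt_pow 2 x).div_const 2)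
    refine D.congr_deriv ?_
    ring
  rw [intervalIntegral.integral_eq_sub_of_hasDerivAt key
    ((continuous_const.sub continuous_id).intervalIntegrable _ _)]
  ring

private lemma int0b (c h : ℝ) : ∫ x in c..(c+h), (x - c) = h*h/2 := by
  have key : ∀ x ∈ Set.uIcc c (c+h), HasDerivAt (fun y => y^2/2 - c*y) (x - c) x := by
    intro x _
    have D := ((hasDerivAt_pow 2 x).div_const 2).sub ((hasDerivAt_id x).const_mul c)
    refine D.congr_deriv ?_
    ring
  rw [intervalIntegral.integral_eq_sub_of_hasDerivAt key
    ((continuous_id.sub continuous_const).intervalIntegrable _ _)]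
  ring

set_option maxHeartbeats 1000000 in
theorem stmt_6 (I : Set ℝ) (f f' : ℝ → ℝ) (a b s q : ℝ)
    (hab : a < b) (hI0 : I ⊆ Set.Ici (0:ℝ)) (hI : Set.Icc a b ⊆ interior I)
    (hs : s ∈ Set.Ioc (0:ℝ) 1) (hq : 1 ≤ q)
    (hder : ∀ x ∈ interior I, HasDerivAt f (f' x) x)
    (hint : IntervalIntegrable f' volume a b)
    (hconv : ∀ x ∈ Set.Icc a b, ∀ y ∈ Set.Icc a b, ∀ t ∈ Set.Icc (0:ℝ) 1,
      |f' (t * x + (1 - t) * y)| ^ q ≤ t ^ s * |f' x| ^ q + (1 - t) ^ s * |f' y| ^ q) :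
    |(f a + f b)/2 - (1 / (b - a)) * ∫ x in a..b, f x|
      ≤ ((b - a)/8) * ((2:ℝ)^(1-s) / ((s+1) * (s+2))) ^ (1/q) *
        ((|f' b| ^ q + ((2:ℝ)^(s+1) + 1) * |f' a| ^ q) ^ (1/q)
          + (|f' a| ^ q + ((2:ℝ)^(s+1) + 1) * |f' b| ^ q) ^ (1/q)) := by
  obtain ⟨hs0, hs1⟩ := hs
  have hq0 : 0 < q := lt_of_lt_of_le zero_lt_one hq
  have hba : (0:ℝ) < b - a := sub_pos.2 hab
  set H : ℝ := (b - a)/2 with hH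
  have hHpos : 0 < H := by positivity
  set m : ℝ := (a + b)/2 with hmdef
  have hm : m = a + H := by rw [hmdef, hH]; ring
  have hb2 : b = a + 2*H := by rw [hH]; ring
  have hbm : b = m + H := by rw [hm, hb2]; ring
  have ham : a = m - H := by rw [hm]; ring
  have ham' : a ≤ m := by rw [hm]; linarith
  have hmb : m ≤ b := by rw [hbm]; linarith
  set A : ℝ := |f' a| ^ q with hA
  set B : ℝ := |f' b| ^ q with hB
  have hA0 : 0 ≤ A := Real.rpow_nonneg (abs_nonneg _) _
  have hB0 : 0 ≤ B := Real.rpow_nonneg (abs_nonneg _) _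
  set D : ℝ := (s+1)*(s+2) with hD
  have hD0 : 0 < D := by rw [hD]; nlinarith
  set k : ℝ := (2:ℝ)^(s+1) + 1 with hk
  have h2s : (0:ℝ) < 2^s := Real.rpow_pos_of_pos two_pos s
  have h2s1 : (2:ℝ)^(s+1) = 2*2^s := by
    rw [Real.rpow_add two_pos, Real.rpow_one]; ring
  have h21s : (2:ℝ)^(1-s) = 2/2^s := by
    rw [Real.rpow_sub two_pos, Real.rpow_one]
  have hC0 : (0:ℝ) ≤ 2^(1-s)/D := by positivity
  have hk0 : 0 ≤ k := by rw [hk]; positivity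
  -- convexity consequence
  have hconv' : ∀ z ∈ Set.Icc a b,
      |f' z| ^ q ≤ ((b-z)/(b-a))^s * A + ((z-a)/(b-a))^s * B := by
    intro z hz
    have ht0 : 0 ≤ (b-z)/(b-a) := div_nonneg (by linarith [hz.2]) hba.le
    have ht1 : (b-z)/(b-a) ≤ 1 := by
      rw [div_le_one hba]; linarith [hz.1]
    have := hconv a ⟨le_refl a, hab.le⟩ b ⟨hab.le, le_refl b⟩ ((b-z)/(b-a)) ⟨ht0, ht1⟩
    have e1 : (b-z)/(b-a) * a + (1 - (b-z)/(b-a)) * b = z := by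
      field_simp
      ring
    have e2 : 1 - (b-z)/(b-a) = (z-a)/(b-a) := by
      field_simp
      ring
    rw [e1, e2] at this
    simpa [hA, hB] using this
  -- the common bound function r
  set r : ℝ → ℝ := fun z => ((b-z)/(b-a))^s * A + ((z-a)/(b-a))^s * B with hr
  have hr0 : ∀ z ∈ Set.Icc a b, 0 ≤ r z := by
    intro z hz
    apply add_nonneg
    · exact mul_nonneg (Real.rpow_nonneg (div_nonneg (by linarith [hz.2]) hba.le) _) hA0
    · exact mul_nonneg (Real.rpow_nonneg (div_nonneg (by linarith [hz.1]) hba.le) _) hB0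
  have hrcont : Continuous r := by
    apply Continuous.add
    · exact (((Real.continuous_rpow_const hs0.le).comp
        ((continuous_const.sub continuous_id).div_const (b-a)))).mul continuous_const
    · exact (((Real.continuous_rpow_const hs0.le).comp
        ((continuous_id.sub continuous_const).div_const (b-a)))).mul continuous_const
  -- integrability of (x - m) * f' x
  have hwint : IntervalIntegrable (fun x => (x - m) * f' x) volume a b :=
    hint.continuousOn_mul ((continuous_id.sub continuous_const).continuousOn)
  have hsub1 : Set.uIcc a m ⊆ Set.uIcc a b := by
    rw [Set.uIcc_of_le ham', Set.uIcc_of_le hab.le]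
    exact Set.Icc_subset_Icc le_rfl hmb
  have hsub2 : Set.uIcc m b ⊆ Set.uIcc a b := by
    rw [Set.uIcc_of_le hmb, Set.uIcc_of_le hab.le]
    exact Set.Icc_subset_Icc ham' le_rfl
  have hwint1 : IntervalIntegrable (fun x => (x - m) * f' x) volume a m :=
    hwint.mono_set hsub1
  have hwint2 : IntervalIntegrable (fun x => (x - m) * f' x) volume m b :=
    hwint.mono_set hsub2
  -- identity
  have hiden : ∫ x in a..b, (x - m) * f' x
      = (b - a) * ((f a + f b)/2) - ∫ x in a..b, f x := by
    have hu : ∀ x ∈ Set.uIcc a b, HasDerivAt (fun y => y - m) ((fun _ => (1:ℝ)) x) x :=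
      fun x _ => (hasDerivAt_id x).sub_const m
    have hv : ∀ x ∈ Set.uIcc a b, HasDerivAt f (f' x) x := by
      intro x hx
      rw [Set.uIcc_of_le hab.le] at hx
      exact hder x (hI hx)
    have heq := intervalIntegral.integral_mul_deriv_eq_deriv_mul hu hv
      (intervalIntegrable_const) hint
    rw [heq]
    have h1 : ∫ x in a..b, (fun _ => (1:ℝ)) x * f x = ∫ x in a..b, f x := by
      simp
    rw [h1, hbm]
    rw [ham]
    ring
  -- rewrite the goal
  have hgoal_eq : (f a + f b)/2 - (1 / (b - a)) * ∫ x in a..b, f x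
      = (∫ x in a..b, (x - m) * f' x) / (b - a) := by
    rw [hiden]
    field_simp
  rw [hgoal_eq, abs_div, abs_of_pos hba, div_le_iff₀ hba]
  rw [← intervalIntegral.integral_add_adjacent_intervals hwint1 hwint2]
  -- integrability on halves
  have hf'1 : IntegrableOn f' (Set.Ioc a m) volume :=
    (intervalIntegrable_iff_integrableOn_Ioc_of_le ham').mp (hint.mono_set hsub1)
  have hf'2 : IntegrableOn f' (Set.Ioc m b) volume :=
    (intervalIntegrable_iff_integrableOn_Ioc_of_le hmb).mp (hint.mono_set hsub2)
  have hrint1 : IntegrableOn (fun x => (m - x) * r x) (Set.Ioc a m) volume :=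
    (((continuous_const.sub continuous_id).mul hrcont).intervalIntegrable a m).1
  have hrint2 : IntegrableOn (fun x => (x - m) * r x) (Set.Ioc m b) volume :=
    (((continuous_id.sub continuous_const).mul hrcont).intervalIntegrable m b).1
  -- weight integrals
  have hw1 : ∫ x in Set.Ioc a m, (m - x) = H*H/2 := by
    rw [← intervalIntegral.integral_of_le ham']
    have := int0a a H
    rwa [← hm] at this
  have hw2 : ∫ x in Set.Ioc m b, (x - m) = H*H/2 := by
    rw [← intervalIntegral.integral_of_le hmb]
    have := int0b m H
    rwa [← hbm] at this
  -- basic rpow facts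
  have hba2s : (b - a : ℝ)^s = 2^s * H^s := by
    rw [show b - a = 2 * H by rw [hH]; ring, Real.mul_rpow (by norm_num) hHpos.le]
  have hHs : (0:ℝ) < H^s := Real.rpow_pos_of_pos hHpos s
  have hHs2 : H^(s+2) = H^s * (H*H) := by
    rw [show s + 2 = s + 1 + 1 by ring,
      Real.rpow_add' hHpos.le (ne_of_gt (by linarith) : s + 1 + 1 ≠ 0),
      Real.rpow_add' hHpos.le (ne_of_gt (by linarith) : s + 1 ≠ 0), Real.rpow_one]
    ring
  have hr_eq : ∀ x ∈ Set.Icc a b,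
      (r x) = (A/(b-a)^s) * ((b - x)^s) + (B/(b-a)^s) * ((x - a)^s) := by
    intro x hx
    simp only [hr]
    rw [Real.div_rpow (by linarith [hx.2] : (0:ℝ) ≤ b - x) hba.le,
      Real.div_rpow (by linarith [hx.1] : (0:ℝ) ≤ x - a) hba.le]
    ring
  -- value of the r-integral on the left half
  have hV1 : ∫ x in Set.Ioc a m, (m - x) * r x ≤ (H*H/2) * (2^(1-s)/D * (B + k * A)) := by
    have e : ∫ x in Set.Ioc a m, (m - x) * r x
        = (A/(b-a)^s) * (∫ x in Set.Ioc a m, ((m - x) * (b - x)^s))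
          + (B/(b-a)^s) * (∫ x in Set.Ioc a m, ((m - x) * (x - a)^s)) := by
      have ig1 : IntegrableOn (fun x => (A/(b-a)^s) * ((m - x) * (b - x)^s))
          (Set.Ioc a m) volume :=
        (continuous_const.mul
          ((continuous_const.sub continuous_id).mul (cont_aux' b s hs0.le))).integrableOn_Ioc
      have ig2 : IntegrableOn (fun x => (B/(b-a)^s) * ((m - x) * (x - a)^s))
          (Set.Ioc a m) volume :=
        (continuous_const.mul
          ((continuous_const.sub continuous_id).mul (cont_aux a s hs0.le))).integrableOn_Ioc
      rw [← integral_const_mul, ← integral_const_mul, ← integral_add ig1 ig2]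
      apply setIntegral_congr_fun measurableSet_Ioc
      intro x hx
      have hx' : x ∈ Set.Icc a b := ⟨hx.1.le, le_trans hx.2 hmb⟩
      simp only
      rw [hr_eq x hx']
      ring
    have c1 : ∫ x in Set.Ioc a m, ((m - x) * (b - x)^s)
        = H^(s+2) * (1 + s * 2^(s+1)) / D := by
      rw [← intervalIntegral.integral_of_le ham']
      have := int3 a H s hHpos hs0
      rwa [← hm, ← hb2, ← hD] at this
    have c2 : ∫ x in Set.Ioc a m, ((m - x) * (x - a)^s) = H^(s+2) / D := by
      rw [← intervalIntegral.integral_of_le ham']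
      have := int1 a H s hHpos hs0
      rwa [← hm, ← hD] at this
    rw [e, c1, c2]
    have lhs_eq : (A/(b-a)^s) * (H^(s+2) * (1 + s * 2^(s+1)) / D)
        + (B/(b-a)^s) * (H^(s+2) / D)
        = (H*H/(2^s*D)) * ((1 + s*(2*2^s)) * A + B) := by
      rw [hba2s, hHs2, h2s1]
      field_simp
    have rhs_eq : (H*H/2) * (2^(1-s)/D * (B + k * A))
        = (H*H/(2^s*D)) * ((2*2^s + 1) * A + B) := by
      rw [h21s, hk, h2s1]
      field_simp
      ring
    rw [lhs_eq, rhs_eq]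
    apply mul_le_mul_of_nonneg_left _ (by positivity)
    have : s * (2*2^s) * A ≤ 1 * (2*2^s) * A :=
      mul_le_mul_of_nonneg_right (mul_le_mul_of_nonneg_right hs1 (by positivity)) hA0
    linarith
  -- value of the r-integral on the right half
  have hV2 : ∫ x in Set.Ioc m b, (x - m) * r x ≤ (H*H/2) * (2^(1-s)/D * (A + k * B)) := by
    have e : ∫ x in Set.Ioc m b, (x - m) * r x
        = (A/(b-a)^s) * (∫ x in Set.Ioc m b, ((x - m) * (b - x)^s))
          + (B/(b-a)^s) * (∫ x in Set.Ioc m b, ((x - m) * (x - a)^s)) := by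
      have ig1 : IntegrableOn (fun x => (A/(b-a)^s) * ((x - m) * (b - x)^s))
          (Set.Ioc m b) volume :=
        (continuous_const.mul
          ((continuous_id.sub continuous_const).mul (cont_aux' b s hs0.le))).integrableOn_Ioc
      have ig2 : IntegrableOn (fun x => (B/(b-a)^s) * ((x - m) * (x - a)^s))
          (Set.Ioc m b) volume :=
        (continuous_const.mul
          ((continuous_id.sub continuous_const).mul (cont_aux a s hs0.le))).integrableOn_Ioc
      rw [← integral_const_mul, ← integral_const_mul, ← integral_add ig1 ig2]
      apply setIntegral_congr_fun measurableSet_Ioc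
      intro x hx
      have hx' : x ∈ Set.Icc a b := ⟨le_trans ham' hx.1.le, hx.2⟩
      simp only
      rw [hr_eq x hx']
      ring
    have c1 : ∫ x in Set.Ioc m b, ((x - m) * (b - x)^s) = H^(s+2) / D := by
      rw [← intervalIntegral.integral_of_le hmb]
      have := int2 m H s hHpos hs0
      rwa [← hbm, ← hD] at this
    have c2 : ∫ x in Set.Ioc m b, ((x - m) * (x - a)^s)
        = H^(s+2) * (1 + s * 2^(s+1)) / D := by
      rw [← intervalIntegral.integral_of_le hmb]
      have := int4 m H s hHpos hs0
      rwa [← hbm, ← ham, ← hD] at this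
    rw [e, c1, c2]
    have lhs_eq : (A/(b-a)^s) * (H^(s+2) / D)
        + (B/(b-a)^s) * (H^(s+2) * (1 + s * 2^(s+1)) / D)
        = (H*H/(2^s*D)) * (A + (1 + s*(2*2^s)) * B) := by
      rw [hba2s, hHs2, h2s1]
      field_simp
    have rhs_eq : (H*H/2) * (2^(1-s)/D * (A + k * B))
        = (H*H/(2^s*D)) * (A + (2*2^s + 1) * B) := by
      rw [h21s, hk, h2s1]
      field_simp
    rw [lhs_eq, rhs_eq]
    apply mul_le_mul_of_nonneg_left _ (by positivity)
    have : s * (2*2^s) * B ≤ 1 * (2*2^s) * B :=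
      mul_le_mul_of_nonneg_right (mul_le_mul_of_nonneg_right hs1 (by positivity)) hB0
    linarith
  -- half estimates
  have hbd1 : ∀ x ∈ Set.Ioc a m, |f' x| ^ q ≤ r x := fun x hx =>
    hconv' x ⟨hx.1.le, le_trans hx.2 hmb⟩
  have hbd2 : ∀ x ∈ Set.Ioc m b, |f' x| ^ q ≤ r x := fun x hx =>
    hconv' x ⟨le_trans ham' hx.1.le, hx.2⟩
  have hrpow_collapse : (H*H/2) ^ (1 - 1/q) * (H*H/2) ^ (1/q : ℝ) = H*H/2 := by
    rw [← Real.rpow_add' (by positivity) (by norm_num : (1 - 1/q) + (1/q) ≠ 0),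
      show (1 - 1/q) + (1/q) = 1 by ring, Real.rpow_one]
  have hin1 : (0:ℝ) ≤ 2^(1-s)/D * (B + k * A) := by positivity
  have hin2 : (0:ℝ) ≤ 2^(1-s)/D * (A + k * B) := by positivity
  have hhalf1 : |∫ x in a..m, (x - m) * f' x|
      ≤ (H*H/2) * (2^(1-s)/D * (B + k * A)) ^ (1/q : ℝ) := by
    have t1 : |∫ x in a..m, (x - m) * f' x| ≤ ∫ x in a..m, (m - x) * |f' x| := by
      refine le_trans (intervalIntegral.abs_integral_le_integral_abs ham') ?_
      apply le_of_eq
      apply intervalIntegral.integral_congr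
      intro x hx
      rw [Set.uIcc_of_le ham'] at hx
      simp only
      rw [abs_mul, abs_of_nonpos (by linarith [hx.2] : x - m ≤ 0)]
      ring
    have t2 := half_est hq ham' (fun x => m - x) f' r
      (continuous_const.sub continuous_id)
      (fun x hx => by linarith [hx.2] : ∀ x ∈ Set.Ioc a m, 0 ≤ m - x)
      hf'1 hrint1 hbd1
    rw [hw1] at t2
    calc |∫ x in a..m, (x - m) * f' x|
        ≤ ∫ x in a..m, (m - x) * |f' x| := t1
      _ = ∫ x in Set.Ioc a m, (m - x) * |f' x| := intervalIntegral.integral_of_le ham'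
      _ ≤ (H*H/2) ^ (1 - 1/q) * (∫ x in Set.Ioc a m, (m - x) * r x) ^ (1/q : ℝ) := t2
      _ ≤ (H*H/2) ^ (1 - 1/q) * ((H*H/2) * (2^(1-s)/D * (B + k * A))) ^ (1/q : ℝ) := by
          apply mul_le_mul_of_nonneg_left _ (by positivity)
          apply Real.rpow_le_rpow _ hV1 (by positivity)
          exact setIntegral_nonneg measurableSet_Ioc fun x hx =>
            mul_nonneg (by linarith [hx.2]) (hr0 x ⟨hx.1.le, le_trans hx.2 hmb⟩)
      _ = (H*H/2) * (2^(1-s)/D * (B + k * A)) ^ (1/q : ℝ) := by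
          rw [Real.mul_rpow (by positivity) hin1, ← mul_assoc, hrpow_collapse]
  have hhalf2 : |∫ x in m..b, (x - m) * f' x|
      ≤ (H*H/2) * (2^(1-s)/D * (A + k * B)) ^ (1/q : ℝ) := by
    have t1 : |∫ x in m..b, (x - m) * f' x| ≤ ∫ x in m..b, (x - m) * |f' x| := by
      refine le_trans (intervalIntegral.abs_integral_le_integral_abs hmb) ?_
      apply le_of_eq
      apply intervalIntegral.integral_congr
      intro x hx
      rw [Set.uIcc_of_le hmb] at hx
      simp only
      rw [abs_mul, abs_of_nonneg (by linarith [hx.1] : 0 ≤ x - m)]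
    have t2 := half_est hq hmb (fun x => x - m) f' r
      (continuous_id.sub continuous_const)
      (fun x hx => by linarith [hx.1] : ∀ x ∈ Set.Ioc m b, 0 ≤ x - m)
      hf'2 hrint2 hbd2
    rw [hw2] at t2
    calc |∫ x in m..b, (x - m) * f' x|
        ≤ ∫ x in m..b, (x - m) * |f' x| := t1
      _ = ∫ x in Set.Ioc m b, (x - m) * |f' x| := intervalIntegral.integral_of_le hmb
      _ ≤ (H*H/2) ^ (1 - 1/q) * (∫ x in Set.Ioc m b, (x - m) * r x) ^ (1/q : ℝ) := t2
      _ ≤ (H*H/2) ^ (1 - 1/q) * ((H*H/2) * (2^(1-s)/D * (A + k * B))) ^ (1/q : ℝ) := by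
          apply mul_le_mul_of_nonneg_left _ (by positivity)
          apply Real.rpow_le_rpow _ hV2 (by positivity)
          exact setIntegral_nonneg measurableSet_Ioc fun x hx =>
            mul_nonneg (by linarith [hx.1]) (hr0 x ⟨le_trans ham' hx.1.le, hx.2⟩)
      _ = (H*H/2) * (2^(1-s)/D * (A + k * B)) ^ (1/q : ℝ) := by
          rw [Real.mul_rpow (by positivity) hin2, ← mul_assoc, hrpow_collapse]
  -- combine
  have hba2H : b - a = 2*H := by rw [hH]; ring
  calc |(∫ x in a..m, (x - m) * f' x) + ∫ x in m..b, (x - m) * f' x|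
      ≤ |∫ x in a..m, (x - m) * f' x| + |∫ x in m..b, (x - m) * f' x| := abs_add_le _ _
    _ ≤ (H*H/2) * (2^(1-s)/D * (B + k * A)) ^ (1/q : ℝ)
        + (H*H/2) * (2^(1-s)/D * (A + k * B)) ^ (1/q : ℝ) := add_le_add hhalf1 hhalf2
    _ = (b - a)/8 * (2^(1-s)/D) ^ (1/q : ℝ)
        * ((B + k * A) ^ (1/q : ℝ) + (A + k * B) ^ (1/q : ℝ)) * (b - a) := by
        rw [Real.mul_rpow hC0 (by positivity), Real.mul_rpow hC0 (by positivity), hba2H]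
        ring
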